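/- arXiv:2503.02132 — 2 statements merged into one kernel-verified Lean document; each statement's English description precedes it below -/
import Mathlib

section
/- Gaussian mechanism (one-dimensional): let f : D → ℝ have L2-sensitivity θ, meaning |f(X) − f(X')| ≤ θ for all neighboring X, X'. For ε ∈ (0,1) and δ ∈ (0,1), the mechanism M(X) = f(X) + Z, where Z ∼ N(0, σ²) with σ = θ·√(2 ln(1.25/δ))/ε, is (ε, δ)-differentially private. -/
open MeasureTheory ProbabilityTheory

open MeasureTheory ProbabilityTheory Real Set
open scoped NNReal ENNReal

lemma gauss_neg_symm {v : ℝ≥0} (hv : v ≠ 0) :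
    (gaussianReal 0 v).map (fun x : ℝ => -1 * x) = gaussianReal 0 v := by
  rw [gaussianReal_map_const_mul (-1 : ℝ)]
  have h1 : NNReal.mk ((-1 : ℝ)^2) (sq_nonneg _) = 1 := by ext; norm_num
  rw [h1]
  norm_num

lemma gauss_half {v : ℝ≥0} (hv : v ≠ 0) (μ : ℝ) :
    gaussianReal μ v (Set.Ioi μ) = 1/2 := by
  have key : gaussianReal 0 v (Set.Ioi 0) = 1/2 := by
    have hsym : gaussianReal 0 v (Set.Iio 0) = gaussianReal 0 v (Set.Ioi 0) := by
      conv_lhs => rw [← gauss_neg_symm hv]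
      rw [Measure.map_apply (measurable_const_mul (-1)) measurableSet_Iio]
      congr 1
      ext x
      simp
    have hsing : gaussianReal 0 v {(0:ℝ)} = 0 :=
      gaussianReal_absolutelyContinuous 0 hv Real.volume_singleton
    have hcompl : gaussianReal 0 v ({(0:ℝ)}ᶜ) = 1 := by
      rw [measure_compl (measurableSet_singleton 0) (measure_ne_top _ _), hsing,
        measure_univ, tsub_zero]
    have hunion : gaussianReal 0 v (Set.Iio 0 ∪ Set.Ioi 0)
        = gaussianReal 0 v (Set.Iio 0) + gaussianReal 0 v (Set.Ioi 0) :=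
      measure_union (by
        simpa using Set.disjoint_left.mpr
          (fun x (hx : x < 0) (hx2 : 0 < x) => absurd (hx.trans hx2) (lt_irrefl x)))
        measurableSet_Ioi
    rw [Set.Iio_union_Ioi, hcompl, hsym, ← two_mul] at hunion
    rw [ENNReal.eq_div_iff (by norm_num) (by norm_num)]
    exact hunion.symm
  have hmap := gaussianReal_map_add_const (μ := 0) (v := v) μ
  rw [zero_add] at hmap
  rw [← hmap, Measure.map_apply (by measurability) measurableSet_Ioi]
  convert key using 2
  ext x
  simp

lemma ofReal_half : ENNReal.ofReal (1/2 : ℝ) = 1/2 := by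
  rw [ENNReal.ofReal_div_of_pos (by norm_num)]
  norm_num

lemma gauss_tail_nonneg {v : ℝ≥0} (hv : v ≠ 0) {t : ℝ} (ht : 0 ≤ t) :
    gaussianReal 0 v (Set.Ioi t) ≤ ENNReal.ofReal (Real.exp (-t^2/(2*v)) / 2) := by
  have hvpos : (0:ℝ) < v := by positivity
  rw [gaussianReal_apply _ hv]
  have hpt : ∀ x ∈ Set.Ioi t, gaussianPDF 0 v x ≤
      ENNReal.ofReal (Real.exp (-t^2/(2*v))) * gaussianPDF t v x := by
    intro x hx
    have hx' : t < x := hx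
    rw [gaussianPDF, gaussianPDF, ← ENNReal.ofReal_mul (exp_nonneg _)]
    apply ENNReal.ofReal_le_ofReal
    rw [gaussianPDFReal, gaussianPDFReal]
    have hexp : rexp (-(x - 0) ^ 2 / (2 * (v:ℝ))) ≤
        rexp (-t^2/(2*(v:ℝ))) * rexp (-(x - t) ^ 2 / (2 * (v:ℝ))) := by
      rw [← Real.exp_add, Real.exp_le_exp, ← add_div,
        div_le_div_iff₀ (by positivity) (by positivity)]
      nlinarith [mul_nonneg ht (sub_pos.mpr hx').le]
    calc (√(2 * π * ↑v))⁻¹ * rexp (-(x - 0) ^ 2 / (2 * ↑v))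
        ≤ (√(2 * π * ↑v))⁻¹ * (rexp (-t^2/(2*(v:ℝ))) * rexp (-(x - t) ^ 2 / (2 * ↑v))) :=
          mul_le_mul_of_nonneg_left hexp (by positivity)
      _ = rexp (-t ^ 2 / (2 * ↑v)) * ((√(2 * π * ↑v))⁻¹ * rexp (-(x - t) ^ 2 / (2 * ↑v))) := by
          ring
  calc ∫⁻ x in Set.Ioi t, gaussianPDF 0 v x
      ≤ ∫⁻ x in Set.Ioi t, ENNReal.ofReal (Real.exp (-t^2/(2*v))) * gaussianPDF t v x :=
        setLIntegral_mono ((measurable_gaussianPDF t v).const_mul _) hpt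
    _ = ENNReal.ofReal (Real.exp (-t^2/(2*v))) * ∫⁻ x in Set.Ioi t, gaussianPDF t v x :=
        lintegral_const_mul _ (measurable_gaussianPDF t v)
    _ = ENNReal.ofReal (Real.exp (-t^2/(2*v))) * (1/2) := by
        rw [← gaussianReal_apply _ hv, gauss_half hv]
    _ = ENNReal.ofReal (Real.exp (-t^2/(2*v)) / 2) := by
        rw [← ofReal_half, ← ENNReal.ofReal_mul (exp_nonneg _)]
        congr 1
        ring

lemma gauss_tail_neg {v : ℝ≥0} (hv : v ≠ 0) {t : ℝ} (ht : t < 0) :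
    gaussianReal 0 v (Set.Ioi t)
      ≤ ENNReal.ofReal (1/2 + (-t) * (Real.sqrt (2*π*v))⁻¹) := by
  have hvpos : (0:ℝ) < v := by positivity
  have hsplit : Set.Ioi t = Set.Ioc t 0 ∪ Set.Ioi (0:ℝ) := (Set.Ioc_union_Ioi_eq_Ioi ht.le).symm
  rw [hsplit]
  calc gaussianReal 0 v (Set.Ioc t 0 ∪ Set.Ioi 0)
      ≤ gaussianReal 0 v (Set.Ioc t 0) + gaussianReal 0 v (Set.Ioi 0) := measure_union_le _ _
    _ ≤ ENNReal.ofReal ((-t) * (Real.sqrt (2*π*v))⁻¹) + ENNReal.ofReal (1/2) := by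
        gcongr
        · rw [gaussianReal_apply _ hv]
          calc ∫⁻ x in Set.Ioc t 0, gaussianPDF 0 v x
              ≤ ∫⁻ _x in Set.Ioc t 0, ENNReal.ofReal ((Real.sqrt (2*π*v))⁻¹) := by
                apply setLIntegral_mono measurable_const
                intro x _
                apply ENNReal.ofReal_le_ofReal
                rw [gaussianPDFReal]
                calc (√(2 * π * ↑v))⁻¹ * rexp (-(x - 0) ^ 2 / (2 * ↑v))
                    ≤ (√(2 * π * ↑v))⁻¹ * 1 := by
                      apply mul_le_mul_of_nonneg_left _ (by positivity)
                      exact Real.exp_le_one_iff.mpr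
                        (div_nonpos_of_nonpos_of_nonneg (neg_nonpos.mpr (sq_nonneg _))
                          (by positivity))
                  _ = (√(2 * π * ↑v))⁻¹ := mul_one _
            _ = ENNReal.ofReal ((Real.sqrt (2*π*v))⁻¹) * volume (Set.Ioc t 0) := by
                rw [setLIntegral_const]
            _ = ENNReal.ofReal ((Real.sqrt (2*π*v))⁻¹) * ENNReal.ofReal (0 - t) := by
                rw [Real.volume_Ioc]
            _ = ENNReal.ofReal ((-t) * (Real.sqrt (2*π*v))⁻¹) := by
                rw [zero_sub, ← ENNReal.ofReal_mul (show (0:ℝ) ≤ (Real.sqrt (2*π*(v:ℝ)))⁻¹ by positivity), mul_comm]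
        · exact le_of_eq (by rw [gauss_half hv, ofReal_half])
    _ = ENNReal.ofReal (1/2 + (-t) * (Real.sqrt (2*π*v))⁻¹) := by
        rw [← ENNReal.ofReal_add (mul_nonneg (neg_nonneg.mpr ht.le) (by positivity)) (by norm_num)]
        congr 1
        ring

lemma gauss_Iio {v : ℝ≥0} (hv : v ≠ 0) (s : ℝ) :
    gaussianReal 0 v (Set.Iio s) = gaussianReal 0 v (Set.Ioi (-s)) := by
  conv_lhs => rw [← gauss_neg_symm hv]
  rw [Measure.map_apply (measurable_const_mul (-1)) measurableSet_Iio]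
  congr 1
  ext x
  simp only [Set.mem_preimage, Set.mem_Iio, Set.mem_Ioi]
  constructor <;> intro h <;> linarith

lemma dp_core {v : ℝ≥0} (hv : v ≠ 0) (a b ε : ℝ) (O : Set ℝ) :
    gaussianReal a v O ≤ ENNReal.ofReal (Real.exp ε) * gaussianReal b v O
      + gaussianReal a v {x | Real.exp ε * gaussianPDFReal b v x < gaussianPDFReal a v x} := by
  set B := {x | Real.exp ε * gaussianPDFReal b v x < gaussianPDFReal a v x} with hB
  have hsplit : gaussianReal a v O ≤ gaussianReal a v (O ∩ Bᶜ) + gaussianReal a v B := by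
    refine le_trans (measure_mono (show O ⊆ (O ∩ Bᶜ) ∪ B by
      intro x hx
      by_cases hxB : x ∈ B
      · exact Or.inr hxB
      · exact Or.inl ⟨hx, hxB⟩)) (measure_union_le _ _)
  refine hsplit.trans (add_le_add ?_ le_rfl)
  rw [gaussianReal_apply _ hv, gaussianReal_apply _ hv]
  calc ∫⁻ x in O ∩ Bᶜ, gaussianPDF a v x
      ≤ ∫⁻ x in O ∩ Bᶜ, ENNReal.ofReal (Real.exp ε) * gaussianPDF b v x := by
        refine setLIntegral_mono ((measurable_gaussianPDF b v).const_mul _) (fun x hx => ?_)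
        have hx2 : ¬ (Real.exp ε * gaussianPDFReal b v x < gaussianPDFReal a v x) := hx.2
        rw [gaussianPDF, gaussianPDF, ← ENNReal.ofReal_mul (exp_nonneg _)]
        exact ENNReal.ofReal_le_ofReal (not_lt.mp hx2)
    _ = ENNReal.ofReal (Real.exp ε) * ∫⁻ x in O ∩ Bᶜ, gaussianPDF b v x :=
        lintegral_const_mul _ (measurable_gaussianPDF b v)
    _ ≤ ENNReal.ofReal (Real.exp ε) * ∫⁻ x in O, gaussianPDF b v x := by
        gcongr
        exact Set.inter_subset_left

lemma bad_bound {v : ℝ≥0} (hv : v ≠ 0) (a b ε θ : ℝ) (hε : 0 < ε) (hθ : 0 < θ)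
    (hab : |a - b| ≤ θ) :
    gaussianReal a v {x | Real.exp ε * gaussianPDFReal b v x < gaussianPDFReal a v x}
      ≤ gaussianReal 0 v (Set.Ioi ((v:ℝ)*ε/θ - θ/2)) := by
  have hvpos : (0:ℝ) < v := by positivity
  have h2v : (0:ℝ) < 2*v := by positivity
  have hset : {x | Real.exp ε * gaussianPDFReal b v x < gaussianPDFReal a v x}
      = {x : ℝ | 2*(v:ℝ)*ε < (a-b)*(2*(x-a)+(a-b))} := by
    ext x
    simp only [Set.mem_setOf_eq, gaussianPDFReal]
    rw [show rexp ε * ((√(2*π*(v:ℝ)))⁻¹ * rexp (-(x - b) ^ 2 / (2 * (v:ℝ))))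
        = (√(2*π*(v:ℝ)))⁻¹ * (rexp ε * rexp (-(x - b) ^ 2 / (2 * (v:ℝ)))) from by ring]
    rw [mul_lt_mul_iff_right₀ (by positivity), ← Real.exp_add, Real.exp_lt_exp]
    rw [show ε + -(x - b) ^ 2 / (2 * (v:ℝ)) = (2*(v:ℝ)*ε + -(x-b)^2)/(2*(v:ℝ)) from by
      field_simp]
    rw [div_lt_div_iff₀ h2v h2v, mul_lt_mul_iff_left₀ h2v]
    constructor <;> intro h <;> nlinarith
  rw [hset]
  have hmap := gaussianReal_map_add_const (μ := 0) (v := v) a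
  rw [zero_add] at hmap
  have hms : MeasurableSet {x : ℝ | 2*(v:ℝ)*ε < (a-b)*(2*(x-a)+(a-b))} := by
    apply measurableSet_lt measurable_const
    fun_prop
  rw [← hmap, Measure.map_apply (measurable_add_const a) hms]
  have hpre : (fun z : ℝ => z + a) ⁻¹' {x : ℝ | 2*(v:ℝ)*ε < (a-b)*(2*(x-a)+(a-b))}
      = {z : ℝ | 2*(v:ℝ)*ε < (a-b)*(2*z+(a-b))} := by
    ext z
    simp only [Set.mem_preimage, Set.mem_setOf_eq, add_sub_cancel_right]
  rw [hpre]
  rcases lt_trichotomy (a-b) 0 with hd | hd | hd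
  · -- a - b < 0
    have hne : a - b ≠ 0 := ne_of_lt hd
    have hdd : 0 < -(a-b) := by linarith
    have hdt : -(a-b) ≤ θ := by
      have := abs_le.mp hab
      linarith [this.1]
    have hIio : {z : ℝ | 2*(v:ℝ)*ε < (a-b)*(2*z+(a-b))}
        = Set.Iio ((v:ℝ)*ε/(a-b) - (a-b)/2) := by
      ext z
      simp only [Set.mem_setOf_eq, Set.mem_Iio]
      rw [show (v:ℝ)*ε/(a-b) - (a-b)/2 = (2*(v:ℝ)*ε - (a-b)^2)/(2*(a-b)) from by
        field_simp]
      rw [lt_div_iff_of_neg (by linarith)]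
      constructor <;> intro h <;> nlinarith
    rw [hIio, gauss_Iio hv]
    apply measure_mono
    apply Set.Ioi_subset_Ioi
    have h1 : (v:ℝ)*ε/θ ≤ (v:ℝ)*ε/(-(a-b)) :=
      div_le_div_of_nonneg_left (by positivity) hdd hdt
    have h2 : -((v:ℝ)*ε/(a-b) - (a-b)/2) = (v:ℝ)*ε/(-(a-b)) - (-(a-b))/2 := by
      rw [div_neg]
      ring
    rw [h2]
    linarith
  · -- a - b = 0
    have hempty : {z : ℝ | 2*(v:ℝ)*ε < (a-b)*(2*z+(a-b))} = ∅ := by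
      ext z
      simp only [Set.mem_setOf_eq, Set.mem_empty_iff_false, iff_false, not_lt, hd]
      nlinarith
    rw [hempty]
    simp
  · -- a - b > 0
    have hne : a - b ≠ 0 := ne_of_gt hd
    have hdt : a - b ≤ θ := le_trans (le_abs_self _) hab
    have hIoi : {z : ℝ | 2*(v:ℝ)*ε < (a-b)*(2*z+(a-b))}
        = Set.Ioi ((v:ℝ)*ε/(a-b) - (a-b)/2) := by
      ext z
      simp only [Set.mem_setOf_eq, Set.mem_Ioi]
      rw [show (v:ℝ)*ε/(a-b) - (a-b)/2 = (2*(v:ℝ)*ε - (a-b)^2)/(2*(a-b)) from by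
        field_simp]
      rw [div_lt_iff₀ (by linarith)]
      constructor <;> intro h <;> nlinarith
    rw [hIoi]
    apply measure_mono
    apply Set.Ioi_subset_Ioi
    have h1 : (v:ℝ)*ε/θ ≤ (v:ℝ)*ε/(a-b) :=
      div_le_div_of_nonneg_left (by positivity) hd hdt
    linarith

lemma exp_fifth : Real.exp ((1:ℝ)/5) ≤ 1.25 := by
  by_contra hcon
  push_neg at hcon
  have h5 : Real.exp ((1:ℝ)/5) ^ (5:ℕ) = Real.exp 1 := by
    rw [← Real.exp_nat_mul]
    norm_num
  have hp : (1.25:ℝ) ^ (5:ℕ) < Real.exp ((1:ℝ)/5) ^ (5:ℕ) :=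
    pow_lt_pow_left₀ hcon (by norm_num) (by norm_num)
  rw [h5] at hp
  nlinarith [Real.exp_one_lt_d9]

lemma exp_quarter : Real.exp ((1:ℝ)/4) ≤ 4/3 := by
  by_contra hcon
  push_neg at hcon
  have h4 : Real.exp ((1:ℝ)/4) ^ (4:ℕ) = Real.exp 1 := by
    rw [← Real.exp_nat_mul]
    norm_num
  have hp : ((4:ℝ)/3) ^ (4:ℕ) < Real.exp ((1:ℝ)/4) ^ (4:ℕ) :=
    pow_lt_pow_left₀ hcon (by norm_num) (by norm_num)
  rw [h4] at hp
  nlinarith [Real.exp_one_lt_d9]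

lemma exp_half : Real.exp ((1:ℝ)/2) ≤ 2.5 := by
  have hsq : Real.exp ((1:ℝ)/2) * Real.exp ((1:ℝ)/2) = Real.exp 1 := by
    rw [← Real.exp_add]; norm_num
  nlinarith [Real.exp_one_lt_d9, Real.exp_pos ((1:ℝ)/2)]

set_option maxHeartbeats 1000000 in
lemma final_tail (θ ε δ σ : ℝ) (hθ : 0 < θ) (hε : 0 < ε) (hε1 : ε < 1) (hδ : 0 < δ)
    (hδ1 : δ < 1) (hσ : σ = θ * Real.sqrt (2 * Real.log (1.25 / δ)) / ε) :
    gaussianReal 0 (σ^2).toNNReal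
        (Set.Ioi ((((σ^2).toNNReal : ℝ≥0) : ℝ)*ε/θ - θ/2)) ≤ ENNReal.ofReal δ := by
  set L := Real.log (1.25/δ) with hLdef
  have hL : 0 < L := Real.log_pos (by rw [lt_div_iff₀ hδ]; linarith)
  have hσpos : 0 < σ := by
    rw [hσ]
    have : 0 < Real.sqrt (2*L) := Real.sqrt_pos.mpr (by linarith)
    positivity
  have hcoe : (((σ^2).toNNReal : ℝ≥0) : ℝ) = σ^2 := Real.coe_toNNReal _ (sq_nonneg σ)
  have hv : (σ^2).toNNReal ≠ 0 := by
    intro h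
    exact absurd (Real.toNNReal_eq_zero.mp h) (not_le.mpr (by positivity))
  have hσ2 : σ^2 = 2*L*θ^2/ε^2 := by
    rw [hσ, div_pow, mul_pow, Real.sq_sqrt (by linarith)]
    ring
  have ht0 : (((σ^2).toNNReal : ℝ≥0) : ℝ)*ε/θ - θ/2 = θ*(4*L-ε)/(2*ε) := by
    rw [hcoe, hσ2]
    field_simp
    ring
  have hexpL : Real.exp L = 1.25/δ := Real.exp_log (by positivity)
  have hδeq : δ = 1.25 * Real.exp (-L) := by
    rw [Real.exp_neg, hexpL]
    field_simp
  rw [ht0]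
  rcases le_or_gt ε (4*L) with hcase | hcase
  · -- t₀ ≥ 0
    have ht0pos : 0 ≤ θ*(4*L-ε)/(2*ε) :=
      div_nonneg (mul_nonneg hθ.le (by linarith)) (by positivity)
    refine (gauss_tail_nonneg hv ht0pos).trans (ENNReal.ofReal_le_ofReal ?_)
    rw [hcoe]
    have hexpo : -(θ*(4*L-ε)/(2*ε))^2/(2*σ^2) = -((4*L-ε)^2/(16*L)) := by
      rw [hσ2]
      field_simp
      ring
    rw [hexpo]
    have hlog : (1:ℝ)/2 ≤ Real.log 2.5 := by
      calc (1:ℝ)/2 = Real.log (Real.exp (1/2)) := (Real.log_exp _).symm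
        _ ≤ Real.log 2.5 := Real.log_le_log (Real.exp_pos _) exp_half
    have key : L - (4*L-ε)^2/(16*L) ≤ Real.log 2.5 := by
      calc L - (4*L-ε)^2/(16*L) = ε/2 - ε^2/(16*L) := by field_simp; ring
        _ ≤ 1/2 := by
            have h2 : (0:ℝ) ≤ ε^2/(16*L) := by positivity
            linarith
        _ ≤ Real.log 2.5 := hlog
    have final : Real.exp (-((4*L-ε)^2/(16*L))) ≤ 2.5 * Real.exp (-L) := by
      rw [show (2.5:ℝ) = Real.exp (Real.log 2.5) from (Real.exp_log (by norm_num)).symm,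
        ← Real.exp_add, Real.exp_le_exp]
      linarith
    rw [hδeq]
    linarith
  · -- t₀ < 0
    have ht0neg : θ*(4*L-ε)/(2*ε) < 0 :=
      div_neg_of_neg_of_pos (mul_neg_of_pos_of_neg hθ (by linarith)) (by positivity)
    refine (gauss_tail_neg hv ht0neg).trans (ENNReal.ofReal_le_ofReal ?_)
    rw [hcoe]
    have hL5 : (1:ℝ)/5 ≤ L := by
      have h1 : (1.25:ℝ) ≤ 1.25/δ := by
        rw [le_div_iff₀ hδ]
        nlinarith
      calc (1:ℝ)/5 = Real.log (Real.exp (1/5)) := (Real.log_exp _).symm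
        _ ≤ Real.log (1.25/δ) := Real.log_le_log (Real.exp_pos _) (exp_fifth.trans h1)
    have hδlb : (15:ℝ)/16 ≤ δ := by
      have hL14 : L < 1/4 := by linarith
      have hmono : Real.exp (-(1/4 : ℝ)) ≤ Real.exp (-L) := Real.exp_le_exp.mpr (by linarith)
      have hh : (3:ℝ)/4 ≤ Real.exp (-(1/4 : ℝ)) := by
        rw [Real.exp_neg]
        have hpos := Real.exp_pos ((1:ℝ)/4)
        have hmul : Real.exp ((1:ℝ)/4) * (Real.exp ((1:ℝ)/4))⁻¹ = 1 :=
          mul_inv_cancel₀ (ne_of_gt hpos)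
        nlinarith [exp_quarter, inv_pos.mpr hpos]
      rw [hδeq]
      linarith
    have hsqrt : 1.5*θ ≤ Real.sqrt (2*π*σ^2) := by
      apply Real.le_sqrt_of_sq_le
      have hq : θ^2 ≤ θ^2/ε^2 := by
        rw [le_div_iff₀ (by positivity)]
        have hε2 : ε^2 ≤ 1 := by nlinarith
        nlinarith [sq_nonneg θ]
      have hπL : (2.4:ℝ) ≤ 4*π*L := by nlinarith [Real.pi_gt_three, hL5]
      have hq0 : (0:ℝ) ≤ θ^2/ε^2 := by positivity
      have hstep := mul_le_mul_of_nonneg_right hπL hq0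
      calc (1.5*θ)^2 = 2.25*θ^2 := by ring
        _ ≤ 2.4*(θ^2/ε^2) := by linarith [hq, sq_nonneg θ]
        _ ≤ (4*π*L)*(θ^2/ε^2) := hstep
        _ = 2*π*(2*L*θ^2/ε^2) := by ring
        _ = 2*π*σ^2 := by rw [hσ2]
    have hinv : (Real.sqrt (2*π*σ^2))⁻¹ ≤ (1.5*θ)⁻¹ :=
      inv_anti₀ (by positivity) hsqrt
    have hmt0 : (0:ℝ) ≤ -(θ*(4*L-ε)/(2*ε)) := le_of_lt (neg_pos.mpr ht0neg)
    have hb : -(θ*(4*L-ε)/(2*ε)) * (Real.sqrt (2*π*σ^2))⁻¹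
        ≤ -(θ*(4*L-ε)/(2*ε)) * (1.5*θ)⁻¹ := mul_le_mul_of_nonneg_left hinv hmt0
    have hc : -(θ*(4*L-ε)/(2*ε)) * (1.5*θ)⁻¹ = (ε-4*L)/(3*ε) := by
      field_simp
      ring
    have hd2 : (ε-4*L)/(3*ε) ≤ 1/12 := by
      rw [div_le_iff₀ (by positivity)]
      linarith
    rw [hc] at hb
    linarith

/-- Gaussian mechanism (one-dimensional): if `f` has L2-sensitivity `θ` for the
neighboring relation, `ε, δ ∈ (0,1)` and `σ = θ·√(2 ln(1.25/δ))/ε`, then the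
mechanism `M(X) = f(X) + Z` with `Z ∼ N(0, σ²)`, i.e. `M(X) ∼ N(f(X), σ²)`,
is `(ε, δ)`-differentially private. -/
theorem gaussian_mechanism_dp {D : Type*} (Neighbor : D → D → Prop) (f : D → ℝ)
    (θ ε δ σ : ℝ)
    (hsens : ∀ X X', Neighbor X X' → |f X - f X'| ≤ θ)
    (hε : 0 < ε) (hε1 : ε < 1) (hδ : 0 < δ) (hδ1 : δ < 1)
    (hσ : σ = θ * Real.sqrt (2 * Real.log (1.25 / δ)) / ε) :
    ∀ X X', Neighbor X X' → ∀ O : Set ℝ, MeasurableSet O →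
      (gaussianReal 0 (σ ^ 2).toNNReal).map (fun z => f X + z) O ≤
        ENNReal.ofReal (Real.exp ε) *
          (gaussianReal 0 (σ ^ 2).toNNReal).map (fun z => f X' + z) O
          + ENNReal.ofReal δ := by
  intro X X' hN O hO
  have hθ0 : 0 ≤ θ := le_trans (abs_nonneg _) (hsens X X' hN)
  have hmapX : (gaussianReal 0 (σ ^ 2).toNNReal).map (fun z => f X + z)
      = gaussianReal (f X) (σ ^ 2).toNNReal := by
    rw [show (fun z : ℝ => f X + z) = (f X + ·) from rfl, gaussianReal_map_const_add, zero_add]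
  have hmapX' : (gaussianReal 0 (σ ^ 2).toNNReal).map (fun z => f X' + z)
      = gaussianReal (f X') (σ ^ 2).toNNReal := by
    rw [show (fun z : ℝ => f X' + z) = (f X' + ·) from rfl, gaussianReal_map_const_add, zero_add]
  rw [hmapX, hmapX']
  rcases eq_or_lt_of_le hθ0 with hθeq | hθpos
  · -- θ = 0 : f X = f X'
    have hfeq : f X = f X' := by
      have := hsens X X' hN
      rw [← hθeq] at this
      have h0 : |f X - f X'| = 0 := le_antisymm this (abs_nonneg _)
      have := abs_eq_zero.mp h0
      linarith
    rw [hfeq]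
    have h1 : (1:ℝ≥0∞) ≤ ENNReal.ofReal (Real.exp ε) := by
      rw [ENNReal.one_le_ofReal]
      exact Real.one_le_exp hε.le
    calc gaussianReal (f X') (σ ^ 2).toNNReal O
        = 1 * gaussianReal (f X') (σ ^ 2).toNNReal O := (one_mul _).symm
      _ ≤ ENNReal.ofReal (Real.exp ε) * gaussianReal (f X') (σ ^ 2).toNNReal O :=
          mul_le_mul_left h1 _
      _ ≤ _ := le_self_add
  · -- θ > 0
    have hL : 0 < Real.log (1.25/δ) := Real.log_pos (by rw [lt_div_iff₀ hδ]; linarith)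
    have hσpos : 0 < σ := by
      rw [hσ]
      have : 0 < Real.sqrt (2 * Real.log (1.25/δ)) := Real.sqrt_pos.mpr (by linarith)
      positivity
    have hv : (σ^2).toNNReal ≠ 0 := by
      intro h
      exact absurd (Real.toNNReal_eq_zero.mp h) (not_le.mpr (by positivity))
    calc gaussianReal (f X) (σ ^ 2).toNNReal O
        ≤ ENNReal.ofReal (Real.exp ε) * gaussianReal (f X') (σ ^ 2).toNNReal O
          + gaussianReal (f X) (σ ^ 2).toNNReal
              {x | Real.exp ε * gaussianPDFReal (f X') (σ ^ 2).toNNReal x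
                < gaussianPDFReal (f X) (σ ^ 2).toNNReal x} :=
        dp_core hv (f X) (f X') ε O
      _ ≤ ENNReal.ofReal (Real.exp ε) * gaussianReal (f X') (σ ^ 2).toNNReal O
          + ENNReal.ofReal δ := by
        refine add_le_add_right ?_ _
        refine (bad_bound hv (f X) (f X') ε θ hε hθpos (hsens X X' hN)).trans ?_
        exact final_tail θ ε δ σ hθpos hε hε1 hδ hδ1 hσ
end

section
/- Laplace mechanism: let f : D → ℝ have L1-sensitivity θ, i.e., |f(X) − f(X')| ≤ θ for all neighboring X, X'. Then the mechanism M(X) = f(X) + Z, where Z has Laplace distribution with scale θ/ε, satisfies (ε, 0)-differential privacy. -/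
open MeasureTheory

/-- The Laplace distribution on `ℝ` with scale `lam`, with density
`(1/(2·lam)) · exp(−|x|/lam)` with respect to Lebesgue measure. -/
noncomputable def laplaceMeasure (lam : ℝ) : Measure ℝ :=
  volume.withDensity fun x => ENNReal.ofReal ((2 * lam)⁻¹ * Real.exp (-|x| / lam))

lemma map_withDensity_add (g : ℝ → ENNReal) (c : ℝ)
    (O : Set ℝ) (hO : MeasurableSet O) :
    (volume.withDensity g).map (fun z => c + z) O = ∫⁻ y in O, g (y - c) := by
  rw [Measure.map_apply (measurable_const_add c) hO,
    withDensity_apply _ (hO.preimage (measurable_const_add c)),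
    ← lintegral_indicator (hO.preimage (measurable_const_add c)) _,
    ← lintegral_indicator hO _]
  have : (fun x => ((fun z => c + z) ⁻¹' O).indicator g x)
      = fun x => O.indicator (fun y => g (y - c)) (x + c) := by
    funext x
    have hx : x ∈ (fun z => c + z) ⁻¹' O ↔ x + c ∈ O := by
      simp [Set.mem_preimage, add_comm]
    by_cases h : x + c ∈ O
    · rw [Set.indicator_of_mem (hx.mpr h), Set.indicator_of_mem h]
      simp
    · rw [Set.indicator_of_notMem (fun hh => h (hx.mp hh)), Set.indicator_of_notMem h]
  rw [this, lintegral_add_right_eq_self]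

/-- Laplace mechanism: if `f` has L1-sensitivity `θ`, then `M(X) = f(X) + Z`
with `Z` Laplace-distributed with scale `θ/ε` satisfies `(ε, 0)`-differential
privacy. -/
theorem laplace_mechanism_dp {D : Type*} (Neighbor : D → D → Prop) (f : D → ℝ)
    (θ ε : ℝ) (hθ : 0 < θ) (hε : 0 < ε)
    (hsens : ∀ X X', Neighbor X X' → |f X - f X'| ≤ θ) :
    ∀ X X', Neighbor X X' → ∀ O : Set ℝ, MeasurableSet O →
      (laplaceMeasure (θ / ε)).map (fun z => f X + z) O ≤
        ENNReal.ofReal (Real.exp ε) *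
          (laplaceMeasure (θ / ε)).map (fun z => f X' + z) O := by
  intro X X' hN O hO
  set lam := θ / ε with hlam
  have hlam0 : 0 < lam := div_pos hθ hε
  set g : ℝ → ENNReal := fun x => ENNReal.ofReal ((2 * lam)⁻¹ * Real.exp (-|x| / lam))
    with hgdef
  rw [laplaceMeasure, map_withDensity_add g _ O hO, map_withDensity_add g _ O hO]
  rw [← lintegral_const_mul' _ _ (by simp)]
  apply lintegral_mono
  intro y
  simp only [hgdef]
  rw [← ENNReal.ofReal_mul (Real.exp_nonneg ε), ← mul_assoc, mul_comm (Real.exp ε),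
    mul_assoc, ← Real.exp_add]
  apply ENNReal.ofReal_le_ofReal
  apply mul_le_mul_of_nonneg_left _ (by positivity)
  apply Real.exp_le_exp.2
  have h1 : |y - f X| ≥ |y - f X'| - θ := by
    have := abs_sub_abs_le_abs_sub (y - f X') (y - f X)
    have h2 : |y - f X' - (y - f X)| = |f X - f X'| := by
      rw [show y - f X' - (y - f X) = f X - f X' by ring]
    linarith [hsens X X' hN]
  have hεlam : ε = θ / lam := by
    field_simp [hlam]
    rw [hlam]; field_simp
  rw [hεlam, ← add_div]
  gcongr
  linarith
end
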